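/- Let f, h_t : X → ℝ∪{±∞} (t ∈ T) be proper convex functions and λ ∈ ℝ^{(T)}_+. If f and λh satisfy condition (AC), then (f + λh)^c = (eco(f + λh))^c = e'co( f^c ⊕ (λh)^c ), and consequently (f + λh)^c ≤ f^c ⊕ (λh)^c pointwise on W. -/

import Mathlib

open scoped Pointwise

noncomputable section

variable {X : Type*} [AddCommGroup X] [Module ℝ X] [TopologicalSpace X]

/-- `Wsp X` is the parameter space `X* × X* × ℝ` used in the `c`-conjugation scheme. -/
abbrev Wsp (X : Type*) [AddCommGroup X] [Module ℝ X] [TopologicalSpace X] :=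
  (X →L[ℝ] ℝ) × (X →L[ℝ] ℝ) × ℝ

/-- The coupling function `c(x,(x*,y*,α)) = ⟨x,x*⟩` if `⟨x,y*⟩ < α`, `+∞` otherwise. -/
def coupling (x : X) (w : Wsp X) : EReal :=
  if w.2.1 x < w.2.2 then ((w.1 x : ℝ) : EReal) else ⊤

/-- The `c`-conjugate of `f : X → ℝ∪{±∞}`.  (EReal subtraction gives priority to `-∞`.) -/
def cConj (f : X → EReal) : Wsp X → EReal :=
  fun w => ⨆ x : X, coupling x w - f x

/-- The `c'`-conjugate of `k : W → ℝ∪{±∞}`. -/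
def cConj' (k : Wsp X → EReal) : X → EReal :=
  fun x => ⨆ w : Wsp X, coupling x w - k w

/-- Epigraph of an extended-real-valued function, as a subset of `Y × ℝ`. -/
def epiE {Y : Type*} (f : Y → EReal) : Set (Y × ℝ) :=
  {p | f p.1 ≤ (p.2 : EReal)}

/-- A set `C` is evenly convex (e-convex) if every point outside `C` can be strictly
separated from `C` by a continuous linear functional. -/
def EConvexSet {Y : Type*} [AddCommGroup Y] [Module ℝ Y] [TopologicalSpace Y]
    (C : Set Y) : Prop :=
  ∀ x₀ ∉ C, ∃ φ : Y →L[ℝ] ℝ, ∀ x ∈ C, φ x < φ x₀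

/-- A function is e-convex if its epigraph is an e-convex subset of `X × ℝ`. -/
def EConvexFn (f : X → EReal) : Prop := EConvexSet (epiE f)

/-- The e-convex hull of a function: its largest e-convex minorant. -/
def eco (f : X → EReal) : X → EReal :=
  fun x => ⨆ g : {g : X → EReal // EConvexFn g ∧ g ≤ f}, g.1 x

/-- A function `k : W → ℝ∪{±∞}` is e'-convex if it is the pointwise supremum of a family
of functions of the form `w ↦ c(x,w) - β` with `x ∈ X`, `β ∈ ℝ`. -/
def E'ConvexFn (k : Wsp X → EReal) : Prop :=
  ∃ S : Set (X × ℝ), k = fun w => ⨆ p ∈ S, (coupling p.1 w - ((p.2 : ℝ) : EReal))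

/-- The e'-convex hull of a function: its largest e'-convex minorant. -/
def e'co (k : Wsp X → EReal) : Wsp X → EReal :=
  fun w => ⨆ g : {g : Wsp X → EReal // E'ConvexFn g ∧ g ≤ k}, g.1 w

/-- A subset of `W × ℝ` is e'-convex if it is the epigraph of an e'-convex function. -/
def E'ConvexSet (D : Set (Wsp X × ℝ)) : Prop :=
  ∃ k : Wsp X → EReal, E'ConvexFn k ∧ D = epiE k

/-- The e'-convex hull of a set: the smallest e'-convex set containing it. -/
def e'coSet (D : Set (Wsp X × ℝ)) : Set (Wsp X × ℝ) :=
  ⋂₀ {E : Set (Wsp X × ℝ) | E'ConvexSet E ∧ D ⊆ E}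

/-- A function is proper if it never takes the value `-∞` and is not identically `+∞`. -/
def ProperFn {Y : Type*} (f : Y → EReal) : Prop :=
  (∀ x, f x ≠ ⊥) ∧ ∃ x, f x ≠ ⊤

/-- Convexity of an extended-real-valued function, via convexity of its epigraph. -/
def ConvexFn (f : X → EReal) : Prop := Convex ℝ (epiE f)

open Classical in
/-- Indicator function: `0` on `D`, `+∞` elsewhere. -/
def indicatorE {Y : Type*} (D : Set Y) : Y → EReal :=
  fun x => if x ∈ D then 0 else ⊤

/-- The `ε`-`c`-subdifferential of `f` at `xb`; empty if `f xb ∉ ℝ`. -/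
def cSubdiff (f : X → EReal) (ε : ℝ) (xb : X) : Set (Wsp X) :=
  {w | (∃ r : ℝ, f xb = (r : EReal)) ∧ w.2.1 xb < w.2.2 ∧
    ∀ x : X, coupling x w - coupling xb w - (ε : EReal) ≤ f x - f xb}

/-- The e-affine function with parameters `(x', y', α, β)`. -/
def eAffine (x' y' : X →L[ℝ] ℝ) (α β : ℝ) : X → EReal :=
  fun x => if y' x < α then ((x' x - β : ℝ) : EReal) else ⊤

/-- A function is e-affine if it equals `eAffine x' y' α β` for some parameters. -/
def IsEAffine (a : X → EReal) : Prop :=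
  ∃ x' y' α β, a = eAffine x' y' α β

/-- The set `Ẽ_{f₁,f₂}` of e-affine functions obtained by adding the parameters of an
e-affine minorant of `f₁` and one of `f₂`. -/
def ETilde (f₁ f₂ : X → EReal) : Set (X → EReal) :=
  {a | ∃ x₁ y₁ : X →L[ℝ] ℝ, ∃ α₁ β₁ : ℝ, ∃ x₂ y₂ : X →L[ℝ] ℝ, ∃ α₂ β₂ : ℝ,
    eAffine x₁ y₁ α₁ β₁ ≤ f₁ ∧ eAffine x₂ y₂ α₂ β₂ ≤ f₂ ∧
    a = eAffine (x₁ + x₂) (y₁ + y₂) (α₁ + α₂) (β₁ + β₂)}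

/-- The additivity condition (AC): `eco (f₁ + f₂) = sup {a : a ∈ Ẽ_{f₁,f₂}}`. -/
def ACcond (f₁ f₂ : X → EReal) : Prop :=
  eco (fun x => f₁ x + f₂ x) = fun x => ⨆ a ∈ ETilde f₁ f₂, a x

/-- Infimal convolution of two functions on `W`. -/
def infConv (k₁ k₂ : Wsp X → EReal) : Wsp X → EReal :=
  fun w => ⨅ w' : Wsp X, k₁ w' + k₂ (w - w')

/-- The DC objective `f - g`, defined to be `+∞` outside `dom f`. -/
def dcDiff (f g : X → EReal) : X → EReal :=
  fun x => if f x = ⊤ then ⊤ else f x - g x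

/-- `λh := Σ_{t∈T} λ_t h_t` for a nonnegative generalized finite sequence `λ`. -/
def lamh {T : Type*} (lam : T →₀ ℝ) (h : T → X → EReal) : X → EReal :=
  fun x => ∑ t ∈ lam.support, ((lam t : ℝ) : EReal) * h t x

/-- The set `B := ∩_{λ∈ℝ^{(T)}_+} {x : (eco λh)(x) ≤ 0}`. -/
def Bset {T : Type*} (h : T → X → EReal) : Set X :=
  {x | ∀ lam : T →₀ ℝ, (∀ t, 0 ≤ lam t) → eco (lamh lam h) x ≤ 0}

/-- The set `K := ∪_{λ∈ℝ^{(T)}_+} epi (λh)^c`. -/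
def Kset {T : Type*} (h : T → X → EReal) : Set (Wsp X × ℝ) :=
  ⋃ lam ∈ {l : T →₀ ℝ | ∀ t, 0 ≤ l t}, epiE (cConj (lamh lam h))


lemma coupling_ne_bot (x : X) (w : Wsp X) : coupling x w ≠ ⊥ := by
  unfold coupling; split <;> simp

lemma econvexFn_top : EConvexFn (fun _ : X => (⊤ : EReal)) := by
  intro p _
  exact ⟨0, fun q hq => absurd hq (by simp [epiE])⟩

lemma econvexFn_eAffine (x' y' : X →L[ℝ] ℝ) (α β : ℝ) :
    EConvexFn (eAffine x' y' α β) := by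
  intro p hp
  have hmem : ∀ q : X × ℝ, q ∈ epiE (eAffine x' y' α β) ↔ y' q.1 < α ∧ x' q.1 - β ≤ q.2 := by
    intro q
    simp only [epiE, eAffine, Set.mem_setOf_eq]
    split
    · rename_i hyq
      rw [EReal.coe_le_coe_iff]
      exact ⟨fun h => ⟨hyq, h⟩, fun h => h.2⟩
    · rename_i hyq
      simp only [top_le_iff]
      constructor
      · intro h; exact absurd h (by simp)
      · intro h; exact absurd h.1 hyq
  by_cases hy : y' p.1 < α
  · -- separation by (x,r) ↦ x' x - r
    refine ⟨x'.comp (ContinuousLinearMap.fst ℝ X ℝ) - ContinuousLinearMap.snd ℝ X ℝ, ?_⟩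
    intro q hq
    rcases (hmem q).mp hq with ⟨_, hq2⟩
    have hp2 : ¬ (x' p.1 - β ≤ p.2) := fun h => hp ((hmem p).mpr ⟨hy, h⟩)
    simp only [ContinuousLinearMap.sub_apply, ContinuousLinearMap.comp_apply,
      ContinuousLinearMap.coe_fst', ContinuousLinearMap.coe_snd']
    linarith [not_le.mp hp2]
  · refine ⟨y'.comp (ContinuousLinearMap.fst ℝ X ℝ), ?_⟩
    intro q hq
    rcases (hmem q).mp hq with ⟨hq1, _⟩
    simp only [ContinuousLinearMap.comp_apply, ContinuousLinearMap.coe_fst']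
    linarith [not_lt.mp hy]

lemma eco_le (g : X → EReal) : eco g ≤ g := fun x => iSup_le fun g' => g'.2.2 x

lemma le_eco {g' g : X → EReal} (h1 : EConvexFn g') (h2 : g' ≤ g) : g' ≤ eco g :=
  fun x => le_iSup (fun p : {p : X → EReal // EConvexFn p ∧ p ≤ g} => p.1 x) ⟨g', h1, h2⟩

lemma cConj_anti {g₁ g₂ : X → EReal} (h : g₁ ≤ g₂) : cConj g₂ ≤ cConj g₁ :=
  fun w => iSup_mono fun x => EReal.sub_le_sub le_rfl (h x)

lemma ereal_cases (x : EReal) : x = ⊥ ∨ x = ⊤ ∨ ∃ r : ℝ, x = r := by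
  induction x using EReal.rec with
  | bot => exact Or.inl rfl
  | coe r => exact Or.inr (Or.inr ⟨r, rfl⟩)
  | top => exact Or.inr (Or.inl rfl)

lemma sub_bot_eq_top {x : EReal} (h : x ≠ ⊥) : x - ⊥ = ⊤ := by
  rw [sub_eq_add_neg]; simp only [EReal.neg_bot]
  exact EReal.add_top_of_ne_bot h

lemma sub_top_eq_bot (x : EReal) : x - ⊤ = ⊥ := by
  rw [sub_eq_add_neg]; simp

lemma top_sub_coe_eq_top (t : ℝ) : (⊤ : EReal) - (t : EReal) = ⊤ := by
  rw [sub_eq_add_neg, ← EReal.coe_neg]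
  exact EReal.top_add_of_ne_bot (by simp)

lemma gx_top_of_sub_bot {x : X} {w : Wsp X} {g : X → EReal}
    (h : coupling x w - g x = ⊥) : g x = ⊤ := by
  rw [sub_eq_add_neg] at h
  rcases EReal.add_eq_bot_iff.mp h with h1 | h1
  · exact absurd h1 (coupling_ne_bot x w)
  · simpa using h1

lemma cConj_eco (g : X → EReal) : cConj g = cConj (eco g) := by
  funext w
  apply le_antisymm
  · exact cConj_anti (eco_le g) w
  · apply iSup_le; intro x
    have hterm : ∀ y, coupling y w - g y ≤ cConj g w := fun y =>
      le_iSup (fun y => coupling y w - g y) y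
    rcases ereal_cases (cConj g w) with hb | hb | ⟨r, hb⟩
    · -- cConj g w = ⊥ : g ≡ ⊤
      have hgtop : ∀ y, g y = ⊤ := by
        intro y
        have h0 := hterm y
        rw [hb] at h0
        exact gx_top_of_sub_bot (le_bot_iff.mp h0)
      have hec : eco g x = ⊤ := top_le_iff.mp
        (le_eco econvexFn_top (fun y => (hgtop y).ge) x)
      rw [hb, hec, sub_top_eq_bot]
    · rw [hb]; exact le_top
    · rw [hb]
      have key : ∀ y, coupling y w - g y ≤ (r : EReal) := fun y => hb ▸ hterm y
      set a := eAffine w.1 w.2.1 w.2.2 r with ha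
      have hag : a ≤ g := by
        intro y
        rcases ereal_cases (g y) with hgy | hgy | ⟨t, hgy⟩
        · exfalso
          have h0 := key y
          rw [hgy, sub_bot_eq_top (coupling_ne_bot y w)] at h0
          exact absurd h0 (by simp)
        · rw [hgy]; exact le_top
        · by_cases hc : w.2.1 y < w.2.2
          · have hcy : coupling y w = ((w.1 y : ℝ) : EReal) := if_pos hc
            have hay : a y = ((w.1 y - r : ℝ) : EReal) := if_pos hc
            have h0 := key y
            rw [hgy, hcy, ← EReal.coe_sub, EReal.coe_le_coe_iff] at h0
            rw [hay, hgy, EReal.coe_le_coe_iff]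
            linarith
          · exfalso
            have h0 := key y
            rw [hgy, show coupling y w = ⊤ from if_neg hc, top_sub_coe_eq_top] at h0
            exact absurd h0 (by simp)
      have haeco : a ≤ eco g := le_eco (econvexFn_eAffine _ _ _ _) hag
      calc coupling x w - eco g x ≤ coupling x w - a x :=
            EReal.sub_le_sub le_rfl (haeco x)
        _ ≤ (r : EReal) := by
            by_cases hc : w.2.1 x < w.2.2
            · rw [show a x = ((w.1 x - r : ℝ) : EReal) from if_pos hc,
                show coupling x w = ((w.1 x : ℝ) : EReal) from if_pos hc,
                ← EReal.coe_sub, EReal.coe_le_coe_iff]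
              linarith
            · rw [show a x = ⊤ from if_neg hc,
                show coupling x w = ⊤ from if_neg hc, sub_top_eq_bot]
              exact bot_le




lemma top_le_of_forall_coe_le {z : EReal} (h : ∀ r : ℝ, (r : EReal) ≤ z) : ⊤ ≤ z := by
  rcases ereal_cases z with hz | hz | ⟨c, hz⟩
  · exfalso; have := h 0; rw [hz] at this; exact absurd this (by simp)
  · rw [hz]
  · exfalso; have := h (c + 1); rw [hz, EReal.coe_le_coe_iff] at this; linarith

lemma e'convexFn_cConj (g : X → EReal) : E'ConvexFn (cConj g) := by
  refine ⟨{p : X × ℝ | ∀ w, coupling p.1 w - ((p.2 : ℝ) : EReal) ≤ cConj g w}, ?_⟩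
  funext w
  apply le_antisymm
  · apply iSup_le; intro x
    rcases ereal_cases (g x) with hgx | hgx | ⟨t, hgx⟩
    · -- g x = ⊥ : cConj g ≡ ⊤, and sup over admissible p is ⊤
      have hcc : ∀ w', cConj g w' = ⊤ := by
        intro w'
        have h0 : coupling x w' - g x ≤ cConj g w' :=
          le_iSup (fun y => coupling y w' - g y) x
        rw [hgx, sub_bot_eq_top (coupling_ne_bot x w')] at h0
        exact top_le_iff.mp h0
      refine le_trans le_top (top_le_of_forall_coe_le ?_)
      intro r
      by_cases hc : w.2.1 x < w.2.2
      · have hcx : coupling x w = ((w.1 x : ℝ) : EReal) := if_pos hc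
        have hmem : (x, w.1 x - r) ∈ {p : X × ℝ | ∀ w', coupling p.1 w' - ((p.2:ℝ):EReal) ≤ cConj g w'} := by
          intro w'; rw [hcc w']; exact le_top
        have := le_iSup₂ (f := fun (p : X × ℝ) (_ : p ∈ _) => coupling p.1 w - ((p.2:ℝ):EReal)) (x, w.1 x - r) hmem
        refine le_trans ?_ this
        rw [hcx, ← EReal.coe_sub, EReal.coe_le_coe_iff]
        simp only []
        linarith
      · have hcx : coupling x w = ⊤ := if_neg hc
        have hmem : (x, (0:ℝ)) ∈ {p : X × ℝ | ∀ w', coupling p.1 w' - ((p.2:ℝ):EReal) ≤ cConj g w'} := by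
          intro w'; rw [hcc w']; exact le_top
        have := le_iSup₂ (f := fun (p : X × ℝ) (_ : p ∈ _) => coupling p.1 w - ((p.2:ℝ):EReal)) (x, (0:ℝ)) hmem
        refine le_trans ?_ this
        rw [hcx]; rw [show ((0:ℝ):EReal) = ((0:ℝ):EReal) from rfl, top_sub_coe_eq_top]
        exact le_top
    · rw [hgx, sub_top_eq_bot]; exact bot_le
    · have hmem : (x, t) ∈ {p : X × ℝ | ∀ w', coupling p.1 w' - ((p.2:ℝ):EReal) ≤ cConj g w'} := by
        intro w'
        have h0 : coupling x w' - g x ≤ cConj g w' :=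
          le_iSup (fun y => coupling y w' - g y) x
        rw [hgx] at h0; exact h0
      have := le_iSup₂ (f := fun (p : X × ℝ) (_ : p ∈ _) => coupling p.1 w - ((p.2:ℝ):EReal)) (x, t) hmem
      rw [hgx]; exact this
  · exact iSup₂_le fun p hp => hp w

lemma coupling_sub_coe_ne_bot (x : X) (w : Wsp X) (t : ℝ) :
    coupling x w - (t : EReal) ≠ ⊥ := by
  by_cases hc : w.2.1 x < w.2.2
  · rw [show coupling x w = ((w.1 x:ℝ):EReal) from if_pos hc, ← EReal.coe_sub]
    exact EReal.coe_ne_bot _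
  · rw [show coupling x w = ⊤ from if_neg hc, top_sub_coe_eq_top]; simp

lemma cConj_add_le_infConv (f g : X → EReal) (hf : ∀ x, f x ≠ ⊥) (hg : ∀ x, g x ≠ ⊥)
    (w : Wsp X) :
    cConj (fun x => f x + g x) w ≤ infConv (cConj f) (cConj g) w := by
  apply le_iInf; intro w'
  apply iSup_le; intro x
  show coupling x w - (f x + g x) ≤ cConj f w' + cConj g (w - w')
  have h1 : coupling x w' - f x ≤ cConj f w' := le_iSup (fun y => coupling y w' - f y) x
  have h2 : coupling x (w - w') - g x ≤ cConj g (w - w') :=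
    le_iSup (fun y => coupling y (w - w') - g y) x
  rcases ereal_cases (f x) with hfx | hfx | ⟨a, hfx⟩
  · exact absurd hfx (hf x)
  · -- f x + g x = ⊤
    have : f x + g x = ⊤ := by rw [hfx]; exact EReal.top_add_of_ne_bot (hg x)
    rw [this, sub_top_eq_bot]; exact bot_le
  · rcases ereal_cases (g x) with hgx | hgx | ⟨b, hgx⟩
    · exact absurd hgx (hg x)
    · have : f x + g x = ⊤ := by rw [hgx]; exact EReal.add_top_of_ne_bot (hf x)
      rw [this, sub_top_eq_bot]; exact bot_le
    · -- both real
      by_cases hc1 : w'.2.1 x < w'.2.2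
      · by_cases hc2 : (w - w').2.1 x < (w - w').2.2
        · -- both couplings real
          have hsub1 : (w - w').2.1 x = w.2.1 x - w'.2.1 x := by
            simp [Prod.snd_sub, Prod.fst_sub, ContinuousLinearMap.sub_apply]
          have hsub2 : (w - w').2.2 = w.2.2 - w'.2.2 := by
            simp [Prod.snd_sub]
          have hcw : w.2.1 x < w.2.2 := by
            rw [hsub1, hsub2] at hc2; linarith
          have hsub0 : (w - w').1 x = w.1 x - w'.1 x := by
            simp [Prod.fst_sub, ContinuousLinearMap.sub_apply]
          rw [show coupling x w = ((w.1 x:ℝ):EReal) from if_pos hcw, hfx, hgx]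
          have e1 : coupling x w' = ((w'.1 x:ℝ):EReal) := if_pos hc1
          have e2 : coupling x (w - w') = (((w - w').1 x:ℝ):EReal) := if_pos hc2
          rw [e1] at h1; rw [e2] at h2
          calc ((w.1 x:ℝ):EReal) - ((a:EReal) + (b:EReal))
              = ((w'.1 x - a : ℝ):EReal) + (((w-w').1 x - b : ℝ):EReal) := by
                norm_cast
                rw [hsub0]; ring
            _ ≤ cConj f w' + cConj g (w - w') := by
                apply add_le_add
                · rw [hfx] at h1; rw [EReal.coe_sub]; exact h1
                · rw [hgx] at h2; rw [EReal.coe_sub]; exact h2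
        · -- coupling x (w-w') = ⊤, cConj g (w-w') = ⊤
          have e2 : coupling x (w - w') = ⊤ := if_neg hc2
          rw [e2, hgx, top_sub_coe_eq_top] at h2
          have hgtop : cConj g (w - w') = ⊤ := top_le_iff.mp h2
          have hfne : cConj f w' ≠ ⊥ := by
            intro hcc
            rw [hcc, le_bot_iff, hfx] at h1
            exact coupling_sub_coe_ne_bot x w' a h1
          rw [hgtop, EReal.add_top_of_ne_bot hfne]
          exact le_top
      · have e1 : coupling x w' = ⊤ := if_neg hc1
        rw [e1, hfx, top_sub_coe_eq_top] at h1
        have hftop : cConj f w' = ⊤ := top_le_iff.mp h1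
        have hgne : cConj g (w - w') ≠ ⊥ := by
          intro hcc
          rw [hcc, le_bot_iff, hgx] at h2
          exact coupling_sub_coe_ne_bot x (w - w') b h2
        rw [hftop, EReal.top_add_of_ne_bot hgne]
        exact le_top




lemma cConj_le_of_eAffine_le {f : X → EReal} {x' y' : X →L[ℝ] ℝ} {α β : ℝ}
    (h : eAffine x' y' α β ≤ f) : cConj f (x', y', α) ≤ (β : EReal) := by
  apply iSup_le; intro x
  calc coupling x (x', y', α) - f x
      ≤ coupling x (x', y', α) - eAffine x' y' α β x := EReal.sub_le_sub le_rfl (h x)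
    _ ≤ (β : EReal) := by
        by_cases hc : y' x < α
        · rw [show coupling x (x', y', α) = ((x' x : ℝ):EReal) from if_pos hc,
            show eAffine x' y' α β x = ((x' x - β : ℝ):EReal) from if_pos hc,
            ← EReal.coe_sub, EReal.coe_le_coe_iff]
          linarith
        · rw [show coupling x (x', y', α) = ⊤ from if_neg hc,
            show eAffine x' y' α β x = ⊤ from if_neg hc, sub_top_eq_bot]
          exact bot_le

lemma part2 (f g : X → EReal) (hf : ∀ x, f x ≠ ⊥) (hg : ∀ x, g x ≠ ⊥)
    (hAC : ACcond f g) :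
    cConj (fun x => f x + g x) = e'co (infConv (cConj f) (cConj g)) := by
  funext w
  apply le_antisymm
  · exact le_iSup
      (fun p : {p : Wsp X → EReal // E'ConvexFn p ∧ p ≤ infConv (cConj f) (cConj g)} => p.1 w)
      ⟨cConj (fun x => f x + g x), e'convexFn_cConj _,
        fun w' => cConj_add_le_infConv f g hf hg w'⟩
  · apply iSup_le
    rintro ⟨k, ⟨S, hS⟩, hkF⟩
    show k w ≤ cConj (fun x => f x + g x) w
    rw [hS]
    apply iSup₂_le
    rintro ⟨x₀, β⟩ hp
    -- b := coupling x₀ · - β is a minorant of infConv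
    have hb : ∀ w', coupling x₀ w' - (β : EReal) ≤ infConv (cConj f) (cConj g) w' := by
      intro w'
      refine le_trans ?_ (hkF w')
      rw [hS]
      exact le_iSup₂ (f := fun (p : X × ℝ) (_ : p ∈ S) => coupling p.1 w' - ((p.2:ℝ):EReal))
        (x₀, β) hp
    -- key : eco (f+g) x₀ ≤ β
    have hkey : eco (fun x => f x + g x) x₀ ≤ (β : EReal) := by
      rw [congrFun hAC x₀]
      apply iSup₂_le
      rintro a ⟨x₁, y₁, α₁, β₁, x₂, y₂, α₂, β₂, ha₁, ha₂, rfl⟩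
      set w₁ : Wsp X := (x₁, y₁, α₁) with hw₁
      set w₂ : Wsp X := (x₂, y₂, α₂) with hw₂
      have hc1 : cConj f w₁ ≤ (β₁ : EReal) := cConj_le_of_eAffine_le ha₁
      have hc2 : cConj g w₂ ≤ (β₂ : EReal) := cConj_le_of_eAffine_le ha₂
      have hF : infConv (cConj f) (cConj g) (w₁ + w₂) ≤ ((β₁ + β₂ : ℝ) : EReal) := by
        refine le_trans (iInf_le _ w₁) ?_
        rw [add_sub_cancel_left, EReal.coe_add]
        exact add_le_add hc1 hc2
      have hbw := le_trans (hb (w₁ + w₂)) hF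
      have hcomp1 : (w₁ + w₂).2.1 = y₁ + y₂ := rfl
      have hcomp2 : (w₁ + w₂).2.2 = α₁ + α₂ := rfl
      have hcomp0 : (w₁ + w₂).1 = x₁ + x₂ := rfl
      by_cases hcond : (y₁ + y₂) x₀ < α₁ + α₂
      · have hcc : coupling x₀ (w₁ + w₂) = (((x₁ + x₂) x₀ : ℝ) : EReal) := by
          unfold coupling
          rw [hcomp1, hcomp2, hcomp0, if_pos hcond]
        rw [hcc, ← EReal.coe_sub, EReal.coe_le_coe_iff] at hbw
        rw [show eAffine (x₁+x₂) (y₁+y₂) (α₁+α₂) (β₁+β₂) x₀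
            = (((x₁+x₂) x₀ - (β₁+β₂) : ℝ) : EReal) from if_pos hcond, EReal.coe_le_coe_iff]
        linarith
      · exfalso
        have hcc : coupling x₀ (w₁ + w₂) = ⊤ := by
          unfold coupling
          rw [hcomp1, hcomp2, if_neg hcond]
        rw [hcc, top_sub_coe_eq_top, top_le_iff] at hbw
        exact EReal.coe_ne_top _ hbw
    calc coupling x₀ w - (β : EReal)
        ≤ coupling x₀ w - eco (fun x => f x + g x) x₀ := EReal.sub_le_sub le_rfl hkey
      _ ≤ cConj (eco (fun x => f x + g x)) w :=
          le_iSup (fun y => coupling y w - eco (fun x => f x + g x) y) x₀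
      _ = cConj (fun x => f x + g x) w := (congrFun (cConj_eco _) w).symm

lemma finset_sum_ne_bot' {ι : Type*} (s : Finset ι) (F : ι → EReal)
    (h : ∀ i ∈ s, F i ≠ ⊥) : ∑ i ∈ s, F i ≠ ⊥ := by
  induction s using Finset.cons_induction with
  | empty => simp
  | cons a s ha ih =>
    rw [Finset.sum_cons]
    intro hc
    rcases EReal.add_eq_bot_iff.mp hc with h1 | h1
    · exact h a (Finset.mem_cons_self a s) h1
    · exact ih (fun i hi => h i (Finset.mem_cons_of_mem hi)) h1

lemma coe_mul_ne_bot' {r : ℝ} (hr : 0 < r) {x : EReal} (hx : x ≠ ⊥) :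
    (r : EReal) * x ≠ ⊥ := by
  rcases ereal_cases x with h | h | ⟨t, h⟩
  · exact absurd h hx
  · rw [h, EReal.mul_top_of_pos (by exact_mod_cast hr)]; simp
  · rw [h, ← EReal.coe_mul]; exact EReal.coe_ne_bot _

lemma lamh_ne_bot {T : Type*} (lam : T →₀ ℝ) (h : T → X → EReal)
    (hhp : ∀ t, ProperFn (h t)) (hlam : ∀ t, 0 ≤ lam t) (x : X) :
    lamh lam h x ≠ ⊥ := by
  apply finset_sum_ne_bot'
  intro t ht
  have h0 : lam t ≠ 0 := Finsupp.mem_support_iff.mp ht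
  exact coe_mul_ne_bot' (lt_of_le_of_ne (hlam t) (Ne.symm h0)) ((hhp t).1 x)


/-- under (AC), `(f+λh)^c = (eco(f+λh))^c = e'co(f^c ⊕ (λh)^c) ≤ f^c ⊕ (λh)^c`. -/
theorem stmt8 [IsTopologicalAddGroup X] [ContinuousSMul ℝ X] [LocallyConvexSpace ℝ X] [T2Space X] {T : Type*}
    (f : X → EReal) (h : T → X → EReal)
    (hfp : ProperFn f) (hfc : ConvexFn f)
    (hhp : ∀ t, ProperFn (h t)) (hhc : ∀ t, ConvexFn (h t))
    (lam : T →₀ ℝ) (hlam : ∀ t, 0 ≤ lam t)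
    (hAC : ACcond f (lamh lam h)) :
    cConj (fun x => f x + lamh lam h x) = cConj (eco (fun x => f x + lamh lam h x)) ∧
    cConj (fun x => f x + lamh lam h x) = e'co (infConv (cConj f) (cConj (lamh lam h))) ∧
    ∀ w : Wsp X, cConj (fun x => f x + lamh lam h x) w
      ≤ infConv (cConj f) (cConj (lamh lam h)) w := by
  have hgne : ∀ x, lamh lam h x ≠ ⊥ := lamh_ne_bot lam h hhp hlam
  have h2 := part2 f (lamh lam h) hfp.1 hgne hAC
  refine ⟨cConj_eco _, h2, fun w => ?_⟩
  rw [h2]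
  exact iSup_le fun p => p.2.2 w


end
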